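/- If ρ1 and ρ2 are equivalent rotor configurations on G (ρ1 ≡ ρ2), then for every vertex v ∈ V0, a single particle performing rotor walk started at v with initial rotor configuration ρ1 reaches the same target vertex as a particle started at v with initial rotor configuration ρ2: t_v(ρ1) = t_v(ρ2). -/

import Mathlib

open Function

/-- A strongly connected finite directed multigraph (self-loops and multiple arcs
allowed), given by source and head maps `src, head : E → V`, together with a nonempty
target set `T` and a rotor mechanism at each vertex: `next` is a cyclic ordering of
the arcs emanating from each vertex (it permutes the arcs, preserves the source, and
acts transitively on the arcs emanating from any fixed vertex). -/
structure RotorSystem (V E : Type) [Fintype V] [DecidableEq V] [Fintype E]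
    [DecidableEq E] where
  src : E → V
  head : E → V
  T : Finset V
  T_nonempty : T.Nonempty
  strongly_connected : ∀ v w : V,
    Relation.ReflTransGen (fun a b => ∃ e : E, src e = a ∧ head e = b) v w
  next : E → E
  next_src : ∀ e, src (next e) = src e
  next_bijective : Function.Bijective next
  next_cyclic : ∀ e e', src e = src e' → ∃ k : ℕ, next^[k] e = e'

namespace RotorSystem

variable {V E : Type} [Fintype V] [DecidableEq V] [Fintype E] [DecidableEq E]

/-- The set `V₀ = V - T` of non-target vertices. -/
abbrev V0 (S : RotorSystem V E) : Type := {v : V // v ∉ S.T}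

/-- A rotor configuration: each non-target vertex carries an arc emanating from it. -/
abbrev RConf (S : RotorSystem V E) : Type :=
  {ρ : S.V0 → E // ∀ v : S.V0, S.src (ρ v) = v.1}

/-- A particle configuration: a number of particles at each non-target vertex. -/
abbrev PConf (S : RotorSystem V E) : Type := S.V0 → ℕ

variable (S : RotorSystem V E)

/-- One step of a single particle's rotor walk: at a non-target vertex the rotor is
first progressed and the particle then moves along the new rotor arc; target vertices
absorb the particle. -/
def step (p : V × S.RConf) : V × S.RConf :=
  if h : p.1 ∈ S.T then p
  else
    (S.head (S.next (p.2.1 ⟨p.1, h⟩)),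
      ⟨Function.update p.2.1 ⟨p.1, h⟩ (S.next (p.2.1 ⟨p.1, h⟩)), by
        intro w
        rcases eq_or_ne w ⟨p.1, h⟩ with rfl | hw
        · rw [Function.update_self, S.next_src]
          exact p.2.2 ⟨p.1, h⟩
        · rw [Function.update_of_ne hw]
          exact p.2.2 w⟩)

open Classical in
/-- Route a single particle from `x` by rotor walk until it first reaches the target
set; the result is the pair (final position, final rotor configuration). -/
noncomputable def route (x : V) (ρ : S.RConf) : V × S.RConf :=
  if h : ∃ n, (S.step^[n] (x, ρ)).1 ∈ S.T then S.step^[Nat.find h] (x, ρ) else (x, ρ)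

/-- `t_x(ρ)`: the target vertex reached by a single particle started at `x` with
initial rotor configuration `ρ`. -/
noncomputable def tgt (x : V) (ρ : S.RConf) : V := (S.route x ρ).1

/-- The particle addition operator `E_v`: add one particle at `v` and route it to the
target set. -/
noncomputable def addAt (v : S.V0) (ρ : S.RConf) : S.RConf := (S.route v.1 ρ).2

/-- The action `σρ` of a particle configuration on a rotor configuration: place
`σ v` particles at each vertex `v` and route them all to the target set. -/
noncomputable def act (σ : S.PConf) (ρ : S.RConf) : S.RConf :=
  (Finset.univ : Finset S.V0).toList.foldr (fun v r => (S.addAt v)^[σ v] r) ρ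

/-- Equivalence of rotor configurations: `ρ ≡ ρ'` iff `σρ = σρ'` for some particle
configuration `σ`. -/
def REquiv (ρ ρ' : S.RConf) : Prop := ∃ σ : S.PConf, S.act σ ρ = S.act σ ρ'

/-- The outdegree `d(v)`. -/
def outdeg (v : V) : ℕ := (Finset.univ.filter fun e : E => S.src e = v).card

/-- The number `d(v,w)` of arcs from `v` to `w`. -/
def numArcs (v w : V) : ℕ :=
  (Finset.univ.filter fun e : E => S.src e = v ∧ S.head e = w).card

/-- A particle configuration is stable if every non-target vertex holds at most
`d(v) - 1` particles. -/
def IsStable (σ : S.PConf) : Prop := ∀ v : S.V0, σ v < S.outdeg v.1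

/-- Parallel toppling: every unstable vertex topples once, sending one particle along
each arc emanating from it. -/
def toppleStep (σ : S.PConf) : S.PConf := fun v =>
  (if S.outdeg v.1 ≤ σ v then σ v - S.outdeg v.1 else σ v) +
    ∑ w : S.V0, (if S.outdeg w.1 ≤ σ w then S.numArcs w.1 v.1 else 0)

open Classical in
/-- The stabilization `σ°` of a particle configuration. -/
noncomputable def stabilize (σ : S.PConf) : S.PConf :=
  if h : ∃ n, S.IsStable (S.toppleStep^[n] σ) then S.toppleStep^[Nat.find h] σ else σ

/-- A stable particle configuration is recurrent if it is reachable (by adding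
particles and stabilizing) from every particle configuration.  The recurrent
configurations form the sandpile group `S(G/T)` under addition-then-stabilization. -/
def IsRecurrent (τ : S.PConf) : Prop :=
  S.IsStable τ ∧ ∀ σ : S.PConf, ∃ τ' : S.PConf, τ = S.stabilize (τ' + σ)

/-- `e` is the identity element of the sandpile group `S(G/T)`. -/
def IsSandpileIdentity (e : S.PConf) : Prop :=
  S.IsRecurrent e ∧ ∀ τ : S.PConf, S.IsRecurrent τ → S.stabilize (e + τ) = τ

/-- The rotor arcs of `ρ`, as a relation on vertices. -/
def rotorRel (ρ : S.RConf) (a b : V) : Prop :=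
  ∃ h : a ∉ S.T, S.head (ρ.1 ⟨a, h⟩) = b

/-- A rotor configuration is acyclic if its rotor arcs contain no directed cycle. -/
def IsAcyclicConf (ρ : S.RConf) : Prop :=
  ∀ v : V, ¬ Relation.TransGen (S.rotorRel ρ) v v

/-- `ρ'` is obtained from `ρ` by pushing a cycle: there are distinct non-target
vertices `v_0, …, v_{r-1}` with the rotor arc of `v_j` pointing to `v_{j+1}`
(cyclically); each such rotor is regressed one step, other rotors are unchanged. -/
def IsCyclePush (ρ ρ' : S.RConf) : Prop :=
  ∃ r : ℕ, 0 < r ∧ ∃ f : ZMod r → S.V0, Function.Injective f ∧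
    (∀ j : ZMod r, S.head (ρ.1 (f j)) = (f (j + 1)).1) ∧
    (∀ j : ZMod r, S.next (ρ'.1 (f j)) = ρ.1 (f j)) ∧
    (∀ v : S.V0, v ∉ Set.range f → ρ'.1 v = ρ.1 v)


/-! ### Basic infrastructure: the rotor permutation -/

noncomputable def nextPerm : Equiv.Perm E := Equiv.ofBijective S.next S.next_bijective

@[simp] lemma nextPerm_apply (e : E) : S.nextPerm e = S.next e := rfl

noncomputable def prevArc (e : E) : E := S.nextPerm.symm e

@[simp] lemma next_prevArc (e : E) : S.next (S.prevArc e) = e :=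
  S.nextPerm.apply_symm_apply e

@[simp] lemma prevArc_next (e : E) : S.prevArc (S.next e) = e :=
  S.nextPerm.symm_apply_apply e

lemma src_prevArc (e : E) : S.src (S.prevArc e) = S.src e := by
  conv_rhs => rw [← S.next_prevArc e]
  rw [S.next_src]

/-- The global period of the rotor permutation. -/
noncomputable def period : ℕ := orderOf S.nextPerm

lemma period_pos : 0 < S.period := by
  have : Finite E := inferInstance
  exact orderOf_pos S.nextPerm

lemma next_iterate_eq_pow (n : ℕ) (e : E) : S.next^[n] e = (S.nextPerm ^ n) e := by
  induction n with
  | zero => simp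
  | succ n ih =>
      rw [Function.iterate_succ_apply', ih, pow_succ', Equiv.Perm.mul_apply]
      rfl

lemma next_iterate_period (e : E) : S.next^[S.period] e = e := by
  rw [next_iterate_eq_pow, period, pow_orderOf_eq_one]
  rfl

lemma next_iterate_pred_period (e : E) : S.next^[S.period - 1] (S.next e) = e := by
  have h1 : S.next^[S.period - 1] (S.next e) = S.next^[S.period] e := by
    rw [← Function.iterate_succ_apply]
    congr 1
    have := S.period_pos
    omega
  rw [h1, next_iterate_period]

lemma src_next_iterate (n : ℕ) (e : E) : S.src (S.next^[n] e) = S.src e := by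
  induction n with
  | zero => rfl
  | succ n ih => rw [Function.iterate_succ_apply', S.next_src, ih]



/-! ### Step and route basics -/

lemma step_of_mem {p : V × S.RConf} (h : p.1 ∈ S.T) : S.step p = p := by
  simp [step, h]

lemma iterate_step_of_mem {p : V × S.RConf} (h : p.1 ∈ S.T) (k : ℕ) :
    S.step^[k] p = p := by
  induction k with
  | zero => rfl
  | succ k ih => rw [Function.iterate_succ_apply', ih, step_of_mem S h]

lemma step_fst_of_not_mem {p : V × S.RConf} (h : p.1 ∉ S.T) :
    (S.step p).1 = S.head (S.next (p.2.1 ⟨p.1, h⟩)) := by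
  simp [step, h]

lemma step_snd_apply {p : V × S.RConf} (h : p.1 ∉ S.T) (w : S.V0) :
    (S.step p).2.1 w = Function.update p.2.1 ⟨p.1, h⟩ (S.next (p.2.1 ⟨p.1, h⟩)) w := by
  simp [step, h]

lemma step_snd_self {p : V × S.RConf} (h : p.1 ∉ S.T) :
    (S.step p).2.1 ⟨p.1, h⟩ = S.next (p.2.1 ⟨p.1, h⟩) := by
  rw [S.step_snd_apply h]; simp

lemma step_snd_ne {p : V × S.RConf} (h : p.1 ∉ S.T) {w : S.V0} (hw : w ≠ ⟨p.1, h⟩) :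
    (S.step p).2.1 w = p.2.1 w := by
  rw [S.step_snd_apply h, Function.update_of_ne hw]

open Classical in
lemma route_spec {x : V} {ρ : S.RConf} {n : ℕ} (hn : (S.step^[n] (x, ρ)).1 ∈ S.T)
    (hmin : ∀ k < n, (S.step^[k] (x, ρ)).1 ∉ S.T) :
    S.route x ρ = S.step^[n] (x, ρ) := by
  have hex : ∃ m, (S.step^[m] (x, ρ)).1 ∈ S.T := ⟨n, hn⟩
  rw [route, dif_pos hex]
  congr 1
  have h1 : Nat.find hex ≤ n := Nat.find_le hn
  have h2 : ¬ Nat.find hex < n := fun hlt => hmin _ hlt (Nat.find_spec hex)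
  omega

open Classical in
lemma route_of_not_exists {x : V} {ρ : S.RConf}
    (h : ¬ ∃ n, (S.step^[n] (x, ρ)).1 ∈ S.T) : S.route x ρ = (x, ρ) := by
  rw [route, dif_neg h]

lemma zmod_cast_inj {r : ℕ} (i s : ℕ) (hi : i < r) (hs : s < r)
    (h : (i : ZMod r) = (s : ZMod r)) : i = s := by
  haveI : NeZero r := ⟨by omega⟩
  have := congrArg ZMod.val h
  rwa [ZMod.val_cast_of_lt hi, ZMod.val_cast_of_lt hs] at this

lemma step_eq_of_pos {p : V × S.RConf} {a : V} (hpa : p.1 = a) (ha : a ∉ S.T) :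
    (S.step p).1 = S.head (S.next (p.2.1 ⟨a, ha⟩)) ∧
    ∀ w, (S.step p).2.1 w
      = Function.update p.2.1 ⟨a, ha⟩ (S.next (p.2.1 ⟨a, ha⟩)) w := by
  subst hpa
  exact ⟨S.step_fst_of_not_mem ha, S.step_snd_apply ha⟩

lemma parallel_prefix
    {r : ℕ} {f : ZMod r → S.V0}
    {κ κ' : S.RConf}
    (hnext : ∀ j, S.next (κ'.1 (f j)) = κ.1 (f j))
    (hoff : ∀ v : S.V0, v ∉ Set.range f → κ'.1 v = κ.1 v)
    (x : V) (n : ℕ)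
    (hpre : ∀ k < n, ¬ ∃ j : ZMod r, (f j).1 = (S.step^[k] (x, κ)).1) :
    (S.step^[n] (x, κ')).1 = (S.step^[n] (x, κ)).1 ∧
    (∀ w : S.V0, (¬ ∃ j, f j = w) →
      (S.step^[n] (x, κ')).2.1 w = (S.step^[n] (x, κ)).2.1 w) ∧
    (∀ j, (S.step^[n] (x, κ')).2.1 (f j) = κ'.1 (f j)) ∧
    (∀ j, (S.step^[n] (x, κ)).2.1 (f j) = κ.1 (f j)) := by
  induction n with
  | zero =>
      refine ⟨rfl, ?_, fun j => rfl, fun j => rfl⟩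
      intro w hw
      exact hoff w (fun hmem => hw (Set.mem_range.mp hmem))
  | succ n ih =>
      have ihn := ih (fun k hk => hpre k (Nat.lt_succ_of_lt hk))
      obtain ⟨ih1, ih2, ih3, ih4⟩ := ihn
      have hAn : ¬ ∃ j : ZMod r, (f j).1 = (S.step^[n] (x, κ)).1 :=
        hpre n (Nat.lt_succ_self n)
      by_cases hT : (S.step^[n] (x, κ)).1 ∈ S.T
      · have hA : S.step^[n+1] (x, κ) = S.step^[n] (x, κ) := by
          rw [Function.iterate_succ_apply', S.step_of_mem hT]
        have hB : S.step^[n+1] (x, κ') = S.step^[n] (x, κ') := by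
          rw [Function.iterate_succ_apply', S.step_of_mem (by rw [ih1]; exact hT)]
        rw [hA, hB]
        exact ⟨ih1, ih2, ih3, ih4⟩
      · have hq : ¬ ∃ j, f j = (⟨(S.step^[n] (x, κ)).1, hT⟩ : S.V0) := by
          rintro ⟨j, hj⟩
          exact hAn ⟨j, congrArg Subtype.val hj⟩
        have hrot : (S.step^[n] (x, κ')).2.1 ⟨(S.step^[n] (x, κ)).1, hT⟩
            = (S.step^[n] (x, κ)).2.1 ⟨(S.step^[n] (x, κ)).1, hT⟩ := ih2 _ hq
        obtain ⟨bf, bs⟩ := S.step_eq_of_pos ih1 hT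
        obtain ⟨af, as⟩ := S.step_eq_of_pos (rfl :
          (S.step^[n] (x, κ)).1 = (S.step^[n] (x, κ)).1) hT
        refine ⟨?_, ?_, ?_, ?_⟩
        · rw [Function.iterate_succ_apply', Function.iterate_succ_apply', bf, af, hrot]
        · intro w hw
          rw [Function.iterate_succ_apply', Function.iterate_succ_apply', bs w, as w]
          by_cases hwp : w = ⟨(S.step^[n] (x, κ)).1, hT⟩
          · subst hwp
            rw [Function.update_self, Function.update_self, hrot]
          · rw [Function.update_of_ne hwp, Function.update_of_ne hwp]
            exact ih2 w hw
        · intro j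
          have hne : f j ≠ ⟨(S.step^[n] (x, κ)).1, hT⟩ := fun hj => hq ⟨j, hj⟩
          rw [Function.iterate_succ_apply', bs (f j), Function.update_of_ne hne]
          exact ih3 j
        · intro j
          have hne : f j ≠ ⟨(S.step^[n] (x, κ)).1, hT⟩ := fun hj => hq ⟨j, hj⟩
          rw [Function.iterate_succ_apply', as (f j), Function.update_of_ne hne]
          exact ih4 j

lemma parallel_loop
    {r : ℕ} (hr : 0 < r) {f : ZMod r → S.V0} (hinj : Function.Injective f)
    {κ κ' : S.RConf}
    (hhead : ∀ j, S.head (κ.1 (f j)) = (f (j + 1)).1)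
    (hnext : ∀ j, S.next (κ'.1 (f j)) = κ.1 (f j))
    (x : V) (m : ℕ) (j₀ : ZMod r)
    (hpos : (S.step^[m] (x, κ')).1 = (f j₀).1)
    (hout : ∀ w : S.V0, (¬ ∃ j, f j = w) →
      (S.step^[m] (x, κ')).2.1 w = (S.step^[m] (x, κ)).2.1 w)
    (hon : ∀ j, (S.step^[m] (x, κ')).2.1 (f j) = κ'.1 (f j)) :
    ∀ s, s ≤ r →
      (S.step^[m + s] (x, κ')).1 = (f (j₀ + (s : ZMod r))).1 ∧
      (∀ w : S.V0, (¬ ∃ j, f j = w) →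
        (S.step^[m + s] (x, κ')).2.1 w = (S.step^[m] (x, κ)).2.1 w) ∧
      (∀ i : ℕ, i < r → s ≤ i →
        (S.step^[m + s] (x, κ')).2.1 (f (j₀ + (i : ZMod r))) = κ'.1 (f (j₀ + (i : ZMod r)))) ∧
      (∀ i : ℕ, i < r → i < s →
        (S.step^[m + s] (x, κ')).2.1 (f (j₀ + (i : ZMod r))) = κ.1 (f (j₀ + (i : ZMod r)))) := by
  intro s
  induction s with
  | zero =>
      intro _
      refine ⟨by simpa using hpos, fun w hw => hout w hw, ?_, ?_⟩
      · intro i _ _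
        exact hon _
      · intro i _ hi
        omega
  | succ s ih =>
      intro hs1
      have hs : s ≤ r := Nat.le_of_succ_le hs1
      have hsr : s < r := hs1
      obtain ⟨ih1, ih2, ih3, ih4⟩ := ih hs
      set p : S.V0 := f (j₀ + (s : ZMod r)) with hp
      have hpT : p.1 ∉ S.T := p.2
      have hrot : (S.step^[m + s] (x, κ')).2.1 p = κ'.1 p := ih3 s hsr le_rfl
      obtain ⟨bf, bs⟩ := S.step_eq_of_pos ih1 hpT
      have hpe : (⟨p.1, hpT⟩ : S.V0) = p := Subtype.ext rfl
      have hstep : S.step^[m + (s + 1)] (x, κ') = S.step (S.step^[m + s] (x, κ')) := by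
        rw [show m + (s + 1) = (m + s) + 1 from rfl, Function.iterate_succ_apply']
      have hcast : ((s + 1 : ℕ) : ZMod r) = (s : ZMod r) + 1 := by push_cast; ring
      have hne_of : ∀ i : ℕ, i < r → i ≠ s → f (j₀ + (i : ZMod r)) ≠ ⟨p.1, hpT⟩ := by
        intro i hir his hEq
        rw [hpe] at hEq
        have := hinj hEq
        have : (i : ZMod r) = (s : ZMod r) := by
          have h2 := add_left_cancel this
          exact h2
        exact his (zmod_cast_inj i s hir hsr this)
      refine ⟨?_, ?_, ?_, ?_⟩
      · rw [hstep, bf, hpe, hrot, hnext, hhead, hcast, add_assoc]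
      · intro w hw
        rw [hstep, bs w]
        have hwp : w ≠ ⟨p.1, hpT⟩ := by
          rw [hpe]; intro hEq; exact hw ⟨_, hEq.symm⟩
        rw [Function.update_of_ne hwp]
        exact ih2 w hw
      · intro i hir hi
        rw [hstep, bs _, Function.update_of_ne (hne_of i hir (by omega))]
        exact ih3 i hir (by omega)
      · intro i hir hi
        rcases Nat.lt_succ_iff_lt_or_eq.mp hi with hlt | hEq
        · rw [hstep, bs _, Function.update_of_ne (hne_of i hir (by omega))]
          exact ih4 i hir hlt
        · subst hEq
          rw [hstep, bs _, hpe, Function.update_self, hrot, hnext]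

theorem push_route {κ κ' : S.RConf} (hp : S.IsCyclePush κ κ') (x : V) :
    (S.route x κ).1 = (S.route x κ').1 ∧
    ((S.route x κ).2 = (S.route x κ').2 ∨
      S.IsCyclePush (S.route x κ).2 (S.route x κ').2) := by
  classical
  obtain ⟨r, hr, f, hinj, hhead, hnext, hoff⟩ := hp
  haveI : NeZero r := ⟨hr.ne'⟩
  by_cases hZ : ∃ n, ∃ j : ZMod r, (f j).1 = (S.step^[n] (x, κ)).1
  · -- Case B : the κ-walk meets the cycle
    set m := Nat.find hZ with hm
    obtain ⟨j₀, hj₀⟩ : ∃ j, (f j).1 = (S.step^[m] (x, κ)).1 := Nat.find_spec hZ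
    have hmmin : ∀ k < m, ¬ ∃ j : ZMod r, (f j).1 = (S.step^[k] (x, κ)).1 :=
      fun k hk => Nat.find_min hZ hk
    have par := S.parallel_prefix hnext hoff x m hmmin
    have parlt : ∀ k ≤ m, (S.step^[k] (x, κ')).1 = (S.step^[k] (x, κ)).1 :=
      fun k hk =>
        (S.parallel_prefix hnext hoff x k (fun k' hk' => hmmin k' (by omega))).1
    have hpreT : ∀ k < m, (S.step^[k] (x, κ)).1 ∉ S.T := by
      intro k hk hT
      have hfr : S.step^[m] (x, κ) = S.step^[k] (x, κ) := by
        rw [show m = (m - k) + k by omega, Function.iterate_add_apply,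
          S.iterate_step_of_mem hT]
      have : (f j₀).1 ∈ S.T := by rw [hj₀, hfr]; exact hT
      exact (f j₀).2 this
    have hmT : (S.step^[m] (x, κ)).1 ∉ S.T := by
      rw [← hj₀]; exact (f j₀).2
    have hposm : (S.step^[m] (x, κ')).1 = (f j₀).1 := par.1.trans hj₀.symm
    have loop := S.parallel_loop hr hinj hhead hnext x m j₀ hposm par.2.1 par.2.2.1
    have hBmr : S.step^[m + r] (x, κ') = S.step^[m] (x, κ) := by
      obtain ⟨l1, l2, _, l4⟩ := loop r le_rfl
      have h1 : (S.step^[m + r] (x, κ')).1 = (S.step^[m] (x, κ)).1 := by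
        rw [l1, ZMod.natCast_self, add_zero, hj₀]
      have h2 : (S.step^[m + r] (x, κ')).2 = (S.step^[m] (x, κ)).2 := by
        apply Subtype.ext
        funext w
        by_cases hw : ∃ j, f j = w
        · obtain ⟨j, rfl⟩ := hw
          have hiv : ((j - j₀).val : ℕ) < r := ZMod.val_lt _
          have hji : j₀ + (((j - j₀).val : ℕ) : ZMod r) = j := by
            rw [ZMod.natCast_val, ZMod.cast_id]
            ring
          have := l4 (j - j₀).val hiv hiv
          rw [hji] at this
          rw [this, par.2.2.2 j]
        · rw [l2 w hw]
      exact Prod.ext_iff.mpr ⟨h1, h2⟩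
    have hshift : ∀ k, S.step^[m + r + k] (x, κ') = S.step^[m + k] (x, κ) := by
      intro k
      rw [show m + r + k = k + (m + r) by ring, Function.iterate_add_apply, hBmr,
        ← Function.iterate_add_apply, show k + m = m + k by ring]
    have hloopT : ∀ s, s < r → (S.step^[m + s] (x, κ')).1 ∉ S.T := by
      intro s hs
      rw [(loop s (le_of_lt hs)).1]
      exact (f _).2
    by_cases hterm : ∃ n, (S.step^[n] (x, κ)).1 ∈ S.T
    · set n₀ := Nat.find hterm with hn₀
      have hspec : (S.step^[n₀] (x, κ)).1 ∈ S.T := Nat.find_spec hterm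
      have hminT : ∀ k < n₀, (S.step^[k] (x, κ)).1 ∉ S.T :=
        fun k hk => Nat.find_min hterm hk
      have hmn : m < n₀ := by
        rcases Nat.lt_trichotomy m n₀ with h | h | h
        · exact h
        · exact absurd (h ▸ hspec) hmT
        · exact absurd hspec (hpreT n₀ h)
      have hA : S.route x κ = S.step^[n₀] (x, κ) := S.route_spec hspec hminT
      have hBn : S.step^[n₀ + r] (x, κ') = S.step^[n₀] (x, κ) := by
        rw [show n₀ + r = m + r + (n₀ - m) by omega, hshift,
          show m + (n₀ - m) = n₀ by omega]
      have hB : S.route x κ' = S.step^[n₀ + r] (x, κ') := by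
        apply S.route_spec
        · rw [hBn]; exact hspec
        · intro k hk
          rcases Nat.lt_or_ge k (m + 1) with hkm | hkm
          · rw [parlt k (by omega)]
            rcases Nat.lt_or_ge k m with h1 | h1
            · exact hpreT k h1
            · have : k = m := by omega
              rw [this]; exact hmT
          · rcases Nat.lt_or_ge k (m + r) with h2 | h2
            · have := hloopT (k - m) (by omega)
              rwa [show m + (k - m) = k by omega] at this
            · have := hshift (k - (m + r))
              rw [show m + r + (k - (m + r)) = k by omega] at this
              rw [this]
              exact hminT _ (by omega)
      rw [hA, hB, hBn]
      exact ⟨rfl, Or.inl rfl⟩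
    · have hBterm : ¬ ∃ n, (S.step^[n] (x, κ')).1 ∈ S.T := by
        rintro ⟨n, hn⟩
        rcases Nat.lt_or_ge n (m + 1) with hkm | hkm
        · rw [parlt n (by omega)] at hn
          exact hterm ⟨n, hn⟩
        · rcases Nat.lt_or_ge n (m + r) with h2 | h2
          · have := hloopT (n - m) (by omega)
            rw [show m + (n - m) = n by omega] at this
            exact this hn
          · have := hshift (n - (m + r))
            rw [show m + r + (n - (m + r)) = n by omega] at this
            rw [this] at hn
            exact hterm ⟨_, hn⟩
      rw [S.route_of_not_exists hterm, S.route_of_not_exists hBterm]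
      exact ⟨rfl, Or.inr ⟨r, hr, f, hinj, hhead, hnext, hoff⟩⟩
  · -- Case A : the κ-walk never meets the cycle
    have hpre : ∀ n, ∀ k, k < n → ¬ ∃ j : ZMod r, (f j).1 = (S.step^[k] (x, κ)).1 :=
      fun n k _ hc => hZ ⟨k, hc⟩
    have par : ∀ n, _ := fun n => S.parallel_prefix hnext hoff x n (hpre n)
    by_cases hterm : ∃ n, (S.step^[n] (x, κ)).1 ∈ S.T
    · set n₀ := Nat.find hterm with hn₀
      have hspec : (S.step^[n₀] (x, κ)).1 ∈ S.T := Nat.find_spec hterm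
      have hminT : ∀ k < n₀, (S.step^[k] (x, κ)).1 ∉ S.T :=
        fun k hk => Nat.find_min hterm hk
      have hA : S.route x κ = S.step^[n₀] (x, κ) := S.route_spec hspec hminT
      have hB : S.route x κ' = S.step^[n₀] (x, κ') := by
        apply S.route_spec
        · rw [(par n₀).1]; exact hspec
        · intro k hk
          rw [(par k).1]
          exact hminT k hk
      rw [hA, hB]
      refine ⟨(par n₀).1.symm, Or.inr ⟨r, hr, f, hinj, ?_, ?_, ?_⟩⟩
      · intro j
        rw [(par n₀).2.2.2 j]
        exact hhead j
      · intro j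
        rw [(par n₀).2.2.1 j, (par n₀).2.2.2 j]
        exact hnext j
      · intro v hv
        exact (par n₀).2.1 v (fun ⟨j, hj⟩ => hv ⟨j, hj⟩)
    · have hBterm : ¬ ∃ n, (S.step^[n] (x, κ')).1 ∈ S.T := by
        rintro ⟨n, hn⟩
        rw [(par n).1] at hn
        exact hterm ⟨n, hn⟩
      rw [S.route_of_not_exists hterm, S.route_of_not_exists hBterm]
      exact ⟨rfl, Or.inr ⟨r, hr, f, hinj, hhead, hnext, hoff⟩⟩

/-! ### Push equivalence -/

def PushEquiv (a b : S.RConf) : Prop := Relation.EqvGen (fun a b => S.IsCyclePush a b) a b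

lemma pushEquiv_refl (a : S.RConf) : S.PushEquiv a a := Relation.EqvGen.refl a

lemma pushEquiv_symm {a b : S.RConf} (h : S.PushEquiv a b) : S.PushEquiv b a :=
  Relation.EqvGen.symm a b h

lemma pushEquiv_trans {a b c : S.RConf} (h1 : S.PushEquiv a b) (h2 : S.PushEquiv b c) :
    S.PushEquiv a c := Relation.EqvGen.trans a b c h1 h2

lemma pushEquiv_of_push {a b : S.RConf} (h : S.IsCyclePush a b) : S.PushEquiv a b :=
  Relation.EqvGen.rel a b h

lemma pushEquiv_tgt {a b : S.RConf} (h : S.PushEquiv a b) (x : V) :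
    S.tgt x a = S.tgt x b := by
  induction h with
  | rel a b hab => exact (S.push_route hab x).1
  | refl a => rfl
  | symm a b _ ih => exact ih.symm
  | trans a b c _ _ ih1 ih2 => exact ih1.trans ih2

lemma pushEquiv_addAt {a b : S.RConf} (h : S.PushEquiv a b) (w : S.V0) :
    S.PushEquiv (S.addAt w a) (S.addAt w b) := by
  induction h with
  | rel a b hab =>
      rcases (S.push_route hab w.1).2 with hEq | hPush
      · unfold addAt
        rw [hEq]
        exact S.pushEquiv_refl _
      · exact S.pushEquiv_of_push hPush
  | refl a => exact S.pushEquiv_refl _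
  | symm a b _ ih => exact S.pushEquiv_symm ih
  | trans a b c _ _ ih1 ih2 => exact S.pushEquiv_trans ih1 ih2

/-! ### Every acyclic configuration is in the image of `addAt w` -/

def pathSeq (ξ : S.RConf) (a : V) : ℕ → V
  | 0 => a
  | (k+1) =>
      if h : pathSeq ξ a k ∉ S.T then S.head (ξ.1 ⟨pathSeq ξ a k, h⟩)
      else pathSeq ξ a k

lemma pathSeq_succ_not_mem (ξ : S.RConf) (a : V) (k : ℕ)
    (h : S.pathSeq ξ a k ∉ S.T) :
    S.pathSeq ξ a (k + 1) = S.head (ξ.1 ⟨S.pathSeq ξ a k, h⟩) := by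
  rw [pathSeq, dif_pos h]

lemma pathSeq_chain (ξ : S.RConf) (a : V) {i j : ℕ} (hij : i < j)
    (hT : ∀ k, k < j → S.pathSeq ξ a k ∉ S.T) :
    Relation.TransGen (S.rotorRel ξ) (S.pathSeq ξ a i) (S.pathSeq ξ a j) := by
  induction j with
  | zero => omega
  | succ j ih =>
      have hj : S.pathSeq ξ a j ∉ S.T := hT j (Nat.lt_succ_self j)
      have hrel : S.rotorRel ξ (S.pathSeq ξ a j) (S.pathSeq ξ a (j + 1)) :=
        ⟨hj, (S.pathSeq_succ_not_mem ξ a j hj).symm⟩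
      rcases Nat.lt_or_ge i j with h1 | h1
      · exact Relation.TransGen.tail (ih h1 (fun k hk => hT k (by omega))) hrel
      · have : i = j := by omega
        subst this
        exact Relation.TransGen.single hrel

theorem acyclic_mem_range_addAt (ξ : S.RConf) (hx : S.IsAcyclicConf ξ) (w : S.V0) :
    ∃ ρ : S.RConf, S.addAt w ρ = ξ := by
  classical
  set g := S.pathSeq ξ w.1 with hg
  -- the path eventually reaches T
  have hK : ∃ k, g k ∈ S.T := by
    by_contra hc
    push_neg at hc
    have hcard : Fintype.card V < Fintype.card (Fin (Fintype.card V + 1)) := by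
      simp
    obtain ⟨i, j, hne, hEq⟩ :=
      Fintype.exists_ne_map_eq_of_card_lt (fun i : Fin (Fintype.card V + 1) => g i.1)
        hcard
    rcases Nat.lt_or_ge i.1 j.1 with h1 | h1
    · exact hx (g i.1) (by
        have := S.pathSeq_chain ξ w.1 h1 (fun k _ => hc k)
        rwa [← hg, ← hEq] at this)
    · have h2 : j.1 < i.1 := by
        rcases Nat.lt_or_ge j.1 i.1 with h | h
        · exact h
        · exact absurd (Fin.ext (by omega)) hne
      exact hx (g j.1) (by
        have := S.pathSeq_chain ξ w.1 h2 (fun k _ => hc k)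
        rwa [← hg, hEq] at this)
  set K := Nat.find hK with hKdef
  have hKT : g K ∈ S.T := Nat.find_spec hK
  have hKmin : ∀ k < K, g k ∉ S.T := fun k hk => Nat.find_min hK hk
  have hK0 : 0 < K := by
    rcases Nat.eq_zero_or_pos K with h | h
    · exfalso
      apply w.2
      rw [← show g 0 = w.1 from rfl, ← h]
      exact hKT
    · exact h
  -- distinctness along the path
  have hdist : ∀ i j, i < j → j < K → g i ≠ g j := by
    intro i j hij hjK hEq
    exact hx (g i) (by
      have := S.pathSeq_chain ξ w.1 hij (fun k hk => hKmin k (by omega))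
      rwa [← hg, ← hEq] at this)
  -- the initial configuration: regress along the path
  have hsrc : ∀ v : S.V0,
      S.src (if ∃ i, i < K ∧ g i = v.1 then S.prevArc (ξ.1 v) else ξ.1 v) = v.1 := by
    intro v
    by_cases hc : ∃ i, i < K ∧ g i = v.1
    · rw [if_pos hc, S.src_prevArc]; exact ξ.2 v
    · rw [if_neg hc]; exact ξ.2 v
  set ρ : S.RConf := ⟨fun v => if ∃ i, i < K ∧ g i = v.1 then S.prevArc (ξ.1 v)
    else ξ.1 v, hsrc⟩ with hρ
  -- the walk invariant
  have hwalk : ∀ s, s ≤ K → (S.step^[s] (w.1, ρ)).1 = g s ∧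
      ∀ v : S.V0, (S.step^[s] (w.1, ρ)).2.1 v =
        if ∃ i, s ≤ i ∧ i < K ∧ g i = v.1 then S.prevArc (ξ.1 v) else ξ.1 v := by
    intro s
    induction s with
    | zero =>
        intro _
        refine ⟨rfl, fun v => ?_⟩
        show ρ.1 v = _
        rw [hρ]
        refine if_congr ?_ rfl rfl
        constructor
        · rintro ⟨i, hi, hgi⟩; exact ⟨i, Nat.zero_le i, hi, hgi⟩
        · rintro ⟨i, _, hi, hgi⟩; exact ⟨i, hi, hgi⟩
    | succ s ih =>
        intro hs1
        have hsK : s < K := hs1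
        obtain ⟨ih1, ih2⟩ := ih (Nat.le_of_succ_le hs1)
        have hgsT : g s ∉ S.T := hKmin s hsK
        obtain ⟨bf, bs⟩ := S.step_eq_of_pos ih1 hgsT
        set p0 : S.V0 := ⟨g s, hgsT⟩ with hp0
        have hrot : (S.step^[s] (w.1, ρ)).2.1 p0 = S.prevArc (ξ.1 p0) := by
          rw [ih2 p0, if_pos ⟨s, le_rfl, hsK, rfl⟩]
        have hstep : S.step^[s + 1] (w.1, ρ) = S.step (S.step^[s] (w.1, ρ)) :=
          Function.iterate_succ_apply' _ _ _
        constructor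
        · rw [hstep, bf, hrot, S.next_prevArc]
          exact (S.pathSeq_succ_not_mem ξ w.1 s hgsT).symm
        · intro v
          rw [hstep, bs v]
          by_cases hvp : v = p0
          · subst hvp
            rw [Function.update_self, hrot, S.next_prevArc]
            have hcond : ¬ ∃ i, s + 1 ≤ i ∧ i < K ∧ g i = p0.1 := by
              rintro ⟨i, hi1, hi2, hi3⟩
              exact hdist s i (by omega) hi2 hi3.symm
            rw [if_neg hcond]
          · rw [Function.update_of_ne hvp, ih2 v]
            refine if_congr ?_ rfl rfl
            constructor
            · rintro ⟨i, hi1, hi2, hi3⟩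
              refine ⟨i, ?_, hi2, hi3⟩
              rcases Nat.lt_or_ge i (s + 1) with h | h
              · exfalso
                have : i = s := by omega
                subst this
                exact hvp (Subtype.ext hi3.symm)
              · exact h
            · rintro ⟨i, hi1, hi2, hi3⟩
              exact ⟨i, by omega, hi2, hi3⟩
  -- conclude
  obtain ⟨hf1, hf2⟩ := hwalk K le_rfl
  have hroute : S.route w.1 ρ = S.step^[K] (w.1, ρ) := by
    apply S.route_spec
    · rw [hf1]; exact hKT
    · intro k hk
      rw [(hwalk k (le_of_lt hk)).1]
      exact hKmin k hk
  refine ⟨ρ, ?_⟩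
  unfold addAt
  rw [hroute]
  apply Subtype.ext
  funext v
  rw [hf2 v, if_neg]
  rintro ⟨i, hi1, hi2, _⟩
  omega

/-! ### Distance to the target set, base arcs, rotor index, weights -/

def reachN : ℕ → V → Prop
  | 0, u => u ∈ S.T
  | (n+1), u => ∃ e, S.src e = u ∧ reachN n (S.head e)

lemma reachN_exists (u : V) : ∃ n, S.reachN n u := by
  obtain ⟨t₀, ht₀⟩ := S.T_nonempty
  have hrtg := S.strongly_connected u t₀
  induction hrtg using Relation.ReflTransGen.head_induction_on with
  | refl => exact ⟨0, ht₀⟩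
  | head hab _ ih =>
      obtain ⟨n, hn⟩ := ih
      obtain ⟨e, he1, he2⟩ := hab
      exact ⟨n + 1, e, he1, he2 ▸ hn⟩

open Classical in
noncomputable def distT (u : V) : ℕ := Nat.find (S.reachN_exists u)

open Classical in
lemma reachN_distT (u : V) : S.reachN (S.distT u) u := Nat.find_spec (S.reachN_exists u)

open Classical in
lemma distT_le {u : V} {n : ℕ} (h : S.reachN n u) : S.distT u ≤ n := Nat.find_le h

lemma distT_pos {u : V} (h : u ∉ S.T) : 0 < S.distT u := by
  rcases Nat.eq_zero_or_pos (S.distT u) with h0 | h0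
  · exfalso
    have := S.reachN_distT u
    rw [h0] at this
    exact h this
  · exact h0

lemma exists_base_arc (v : S.V0) :
    ∃ e, S.src e = v.1 ∧ S.distT (S.head e) < S.distT v.1 := by
  have hpos := S.distT_pos v.2
  have hreach := S.reachN_distT v.1
  obtain ⟨n, hn⟩ : ∃ n, S.distT v.1 = n + 1 := ⟨S.distT v.1 - 1, by omega⟩
  rw [hn] at hreach
  obtain ⟨e, he1, he2⟩ := hreach
  refine ⟨e, he1, ?_⟩
  have h3 : S.distT (S.head e) ≤ n := S.distT_le he2
  omega

noncomputable def baseArc (v : S.V0) : E := (S.exists_base_arc v).choose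

lemma baseArc_src (v : S.V0) : S.src (S.baseArc v) = v.1 :=
  (S.exists_base_arc v).choose_spec.1

lemma baseArc_dist (v : S.V0) : S.distT (S.head (S.baseArc v)) < S.distT v.1 :=
  (S.exists_base_arc v).choose_spec.2

open Classical in
/-- The rotor index of a configuration at a vertex. -/
noncomputable def kIdx (ρ : S.RConf) (v : S.V0) : ℕ :=
  Nat.find (S.next_cyclic (S.baseArc v) (ρ.1 v) (by rw [S.baseArc_src, ρ.2]))

open Classical in
lemma kIdx_spec (ρ : S.RConf) (v : S.V0) :
    S.next^[S.kIdx ρ v] (S.baseArc v) = ρ.1 v :=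
  Nat.find_spec (S.next_cyclic (S.baseArc v) (ρ.1 v) (by rw [S.baseArc_src, ρ.2]))

open Classical in
lemma kIdx_le {ρ : S.RConf} {v : S.V0} {n : ℕ}
    (h : S.next^[n] (S.baseArc v) = ρ.1 v) : S.kIdx ρ v ≤ n := Nat.find_le h

open Classical in
lemma kIdx_min {ρ : S.RConf} {v : S.V0} {n : ℕ} (h : n < S.kIdx ρ v) :
    S.next^[n] (S.baseArc v) ≠ ρ.1 v :=
  Nat.find_min (S.next_cyclic (S.baseArc v) (ρ.1 v) (by rw [S.baseArc_src, ρ.2])) h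

lemma kIdx_zero_of_eq {ρ : S.RConf} {v : S.V0} (h : ρ.1 v = S.baseArc v) :
    S.kIdx ρ v = 0 :=
  Nat.le_zero.mp (S.kIdx_le (by simpa using h.symm))

lemma kIdx_pos_of_ne {ρ : S.RConf} {v : S.V0} (h : ρ.1 v ≠ S.baseArc v) :
    0 < S.kIdx ρ v := by
  rcases Nat.eq_zero_or_pos (S.kIdx ρ v) with h0 | h0
  · exfalso
    have := S.kIdx_spec ρ v
    rw [h0] at this
    exact h (this.symm ▸ rfl)
  · exact h0

/-- Regressing a non-base rotor decreases the index by one. -/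
lemma kIdx_prevArc_of_ne {ρ ρ' : S.RConf} {v : S.V0}
    (hρ' : ρ'.1 v = S.prevArc (ρ.1 v)) (h : ρ.1 v ≠ S.baseArc v) :
    S.kIdx ρ' v = S.kIdx ρ v - 1 := by
  have hpos := S.kIdx_pos_of_ne h
  have hspec := S.kIdx_spec ρ v
  have h3 : S.next (S.next^[S.kIdx ρ v - 1] (S.baseArc v))
      = S.next^[S.kIdx ρ v] (S.baseArc v) := by
    rw [← Function.iterate_succ_apply' S.next (S.kIdx ρ v - 1) (S.baseArc v)]
    congr 1
    omega
  have hwit : S.next^[S.kIdx ρ v - 1] (S.baseArc v) = ρ'.1 v := by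
    apply S.next_bijective.injective
    rw [hρ', S.next_prevArc, h3, hspec]
  apply le_antisymm (S.kIdx_le hwit)
  by_contra hlt
  push_neg at hlt
  have h2 : S.next^[S.kIdx ρ' v + 1] (S.baseArc v) = ρ.1 v := by
    rw [Function.iterate_succ_apply', S.kIdx_spec ρ' v, hρ', S.next_prevArc]
  exact S.kIdx_min (by omega) h2

/-- Regressing a base rotor gives index at most `period - 1`. -/
lemma kIdx_prevArc_of_eq {ρ ρ' : S.RConf} {v : S.V0}
    (hρ' : ρ'.1 v = S.prevArc (ρ.1 v)) (h : ρ.1 v = S.baseArc v) :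
    S.kIdx ρ' v ≤ S.period - 1 := by
  apply S.kIdx_le
  have h3 : S.next (S.next^[S.period - 1] (S.baseArc v))
      = S.next^[S.period] (S.baseArc v) := by
    rw [← Function.iterate_succ_apply' S.next (S.period - 1) (S.baseArc v)]
    congr 1
    have := S.period_pos
    omega
  apply S.next_bijective.injective
  rw [hρ', h, S.next_prevArc, h3, S.next_iterate_period]

lemma kIdx_lt_period (ρ : S.RConf) (v : S.V0) : S.kIdx ρ v < S.period := by
  have hspec := S.kIdx_spec ρ v
  by_contra hge
  push_neg at hge
  have h2 : S.next^[S.kIdx ρ v - S.period] (S.baseArc v) = ρ.1 v := by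
    rw [← hspec, show S.kIdx ρ v = (S.kIdx ρ v - S.period) + S.period by
      have := S.period_pos; omega, Function.iterate_add_apply, S.next_iterate_period]
    congr 1
    omega
  have := S.kIdx_le h2
  have := S.period_pos
  omega

/-! ### The termination measure -/

noncomputable def maxDist : ℕ := (Finset.univ : Finset S.V0).sup (fun v => S.distT v.1)

lemma distT_le_maxDist (v : S.V0) : S.distT v.1 ≤ S.maxDist :=
  Finset.le_sup (f := fun v : S.V0 => S.distT v.1) (Finset.mem_univ v)

noncomputable def wBase : ℕ := Fintype.card S.V0 * S.period + 1

lemma wBase_pos : 0 < S.wBase := Nat.succ_pos _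

noncomputable def weight (v : S.V0) : ℕ := S.wBase ^ (S.maxDist - S.distT v.1)

lemma weight_pos (v : S.V0) : 0 < S.weight v := pow_pos S.wBase_pos _

noncomputable def mu (ρ : S.RConf) : ℕ :=
  ∑ v : S.V0, S.kIdx ρ v * S.weight v

/-! ### Extracting a simple rotor cycle from a non-acyclic configuration -/

lemma transGen_to_chain {R : V → V → Prop} {a b : V} (h : Relation.TransGen R a b) :
    ∃ n : ℕ, 0 < n ∧ ∃ c : ℕ → V, c 0 = a ∧ c n = b ∧ ∀ i < n, R (c i) (c (i + 1)) := by
  induction h with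
  | @single b' hab =>
      refine ⟨1, one_pos, fun i => if i = 0 then a else b', ?_, ?_, ?_⟩
      · simp
      · simp
      · intro i hi
        have hi0 : i = 0 := by omega
        subst hi0
        simpa using hab
  | @tail b' c' _ hbc ih =>
      obtain ⟨n, hn, c, hc0, hcn, hstep⟩ := ih
      refine ⟨n + 1, by omega, fun i => if i = n + 1 then c' else c i, ?_, ?_, ?_⟩
      · simp only
        rw [if_neg (by omega)]
        exact hc0
      · simp
      · intro i hi
        simp only
        rcases Nat.lt_or_ge i n with h1 | h1
        · rw [if_neg (by omega), if_neg (by omega)]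
          exact hstep i h1
        · have hin : i = n := by omega
          subst hin
          rw [if_neg (by omega), if_pos rfl, hcn]
          exact hbc

lemma exists_simple_cycle (ρ : S.RConf) (hne : ¬ S.IsAcyclicConf ρ) :
    ∃ r : ℕ, 0 < r ∧ ∃ f : ZMod r → S.V0, Function.Injective f ∧
      (∀ j, S.head (ρ.1 (f j)) = (f (j + 1)).1) := by
  classical
  rw [IsAcyclicConf] at hne
  push_neg at hne
  obtain ⟨v, hv⟩ := hne
  have hQ : ∃ m, 0 < m ∧ ∃ c : ℕ → V, c 0 = c m ∧
      ∀ i < m, S.rotorRel ρ (c i) (c (i + 1)) := by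
    obtain ⟨n, hn, c, hc0, hcn, hstep⟩ := transGen_to_chain hv
    exact ⟨n, hn, c, by rw [hc0, hcn], hstep⟩
  set r := Nat.find hQ with hrdef
  obtain ⟨hr, c, hclosed, hstep⟩ : 0 < r ∧ ∃ c : ℕ → V, c 0 = c r ∧
      ∀ i < r, S.rotorRel ρ (c i) (c (i + 1)) := Nat.find_spec hQ
  haveI : NeZero r := ⟨hr.ne'⟩
  -- distinctness
  have hdist : ∀ i j, i < j → j < r → c i ≠ c j := by
    intro i j hij hjr hEq
    have hshort : 0 < j - i ∧ ∃ c' : ℕ → V, c' 0 = c' (j - i) ∧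
        ∀ k < j - i, S.rotorRel ρ (c' k) (c' (k + 1)) := by
      refine ⟨by omega, fun k => c (i + k), ?_, ?_⟩
      · show c (i + 0) = c (i + (j - i))
        rw [show i + 0 = i by omega, show i + (j - i) = j by omega]
        exact hEq
      · intro k hk
        show S.rotorRel ρ (c (i + k)) (c (i + (k + 1)))
        rw [show i + (k + 1) = i + k + 1 by omega]
        exact hstep (i + k) (by omega)
    exact Nat.find_min hQ (show j - i < r by omega) hshort
  have hnotT : ∀ i, i < r → c i ∉ S.T := by
    intro i hi
    obtain ⟨h, _⟩ := hstep i hi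
    exact h
  refine ⟨r, hr, fun j => ⟨c j.val, hnotT j.val (ZMod.val_lt j)⟩, ?_, ?_⟩
  · intro j j' hEq
    have hv : c j.val = c j'.val := congrArg Subtype.val hEq
    have : j.val = j'.val := by
      by_contra hne'
      rcases Nat.lt_or_ge j.val j'.val with h1 | h1
      · exact hdist _ _ h1 (ZMod.val_lt j') hv
      · exact hdist _ _ (by omega) (ZMod.val_lt j) hv.symm
    exact ZMod.val_injective _ this
  · intro j
    obtain ⟨hT', hhd⟩ := hstep j.val (ZMod.val_lt j)
    have heq1 : (⟨c j.val, hT'⟩ : S.V0) = ⟨c j.val, hnotT j.val (ZMod.val_lt j)⟩ :=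
      Subtype.ext rfl
    rw [heq1] at hhd
    rw [hhd]
    show c (j.val + 1) = c ((j + 1).val)
    rcases Nat.lt_or_ge (j.val + 1) r with h1 | h1
    · have : (j + 1).val = j.val + 1 := by
        have hj : ((j.val + 1 : ℕ) : ZMod r) = j + 1 := by
          push_cast
          rw [ZMod.natCast_val, ZMod.cast_id]
        rw [← hj, ZMod.val_cast_of_lt h1]
      rw [this]
    · have hjr : j.val + 1 = r := by
        have := ZMod.val_lt j
        omega
      have : j + 1 = 0 := by
        have hj : ((j.val + 1 : ℕ) : ZMod r) = j + 1 := by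
          push_cast
          rw [ZMod.natCast_val, ZMod.cast_id]
        rw [← hj, hjr, ZMod.natCast_self]
      rw [this, ZMod.val_zero, hclosed, hjr]

lemma kIdx_eq_of_eq {ρ ρ' : S.RConf} {v : S.V0} (h : ρ.1 v = ρ'.1 v) :
    S.kIdx ρ v = S.kIdx ρ' v := by
  apply le_antisymm
  · exact S.kIdx_le (h ▸ S.kIdx_spec ρ' v)
  · exact S.kIdx_le (h ▸ S.kIdx_spec ρ v)

theorem exists_pop {ρ : S.RConf} (hne : ¬ S.IsAcyclicConf ρ) :
    ∃ ρ' : S.RConf, S.IsCyclePush ρ ρ' ∧ S.mu ρ' < S.mu ρ := by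
  classical
  obtain ⟨r, hr, f, hinj, hhead⟩ := S.exists_simple_cycle ρ hne
  haveI : NeZero r := ⟨hr.ne'⟩
  haveI : Nonempty (ZMod r) := ⟨0⟩
  have hsrc' : ∀ v : S.V0,
      S.src (if v ∈ Set.range f then S.prevArc (ρ.1 v) else ρ.1 v) = v.1 := by
    intro v
    by_cases hv : v ∈ Set.range f
    · rw [if_pos hv, S.src_prevArc, ρ.2]
    · rw [if_neg hv, ρ.2]
  set ρ' : S.RConf := ⟨fun v => if v ∈ Set.range f then S.prevArc (ρ.1 v) else ρ.1 v,
    hsrc'⟩ with hρ'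
  have hρ'on : ∀ j, ρ'.1 (f j) = S.prevArc (ρ.1 (f j)) := by
    intro j
    show (if f j ∈ Set.range f then _ else _) = _
    rw [if_pos ⟨j, rfl⟩]
  have hρ'off : ∀ v : S.V0, v ∉ Set.range f → ρ'.1 v = ρ.1 v := by
    intro v hv
    show (if v ∈ Set.range f then _ else _) = _
    rw [if_neg hv]
  have hpush : S.IsCyclePush ρ ρ' :=
    ⟨r, hr, f, hinj, hhead, fun j => by rw [hρ'on j, S.next_prevArc], hρ'off⟩
  refine ⟨ρ', hpush, ?_⟩
  -- the minimum-distance vertex on the cycle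
  obtain ⟨j₀, _, hj₀min⟩ := Finset.exists_min_image (Finset.univ : Finset (ZMod r))
    (fun j => S.distT (f j).1) Finset.univ_nonempty
  have hj₀min' : ∀ j, S.distT (f j₀).1 ≤ S.distT (f j).1 :=
    fun j => hj₀min j (Finset.mem_univ j)
  -- j₀ is not a wrap
  have hj₀ne : ρ.1 (f j₀) ≠ S.baseArc (f j₀) := by
    intro hEq
    have h1 : S.distT (S.head (ρ.1 (f j₀))) < S.distT (f j₀).1 := by
      rw [hEq]; exact S.baseArc_dist (f j₀)
    rw [hhead j₀] at h1
    exact absurd (hj₀min' (j₀ + 1)) (by omega)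
  -- every wrap has strictly larger distance
  have hwrapdist : ∀ j, ρ.1 (f j) = S.baseArc (f j) →
      S.distT (f j₀).1 + 1 ≤ S.distT (f j).1 := by
    intro j hEq
    have h1 : S.distT (S.head (ρ.1 (f j))) < S.distT (f j).1 := by
      rw [hEq]; exact S.baseArc_dist (f j)
    rw [hhead j] at h1
    have := hj₀min' (j + 1)
    omega
  -- reduce to the sum over the cycle
  have hcompl : ∀ v : S.V0, v ∉ Finset.image f Finset.univ →
      S.kIdx ρ' v * S.weight v = S.kIdx ρ v * S.weight v := by
    intro v hv
    have hv' : v ∉ Set.range f := by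
      intro ⟨j, hj⟩
      exact hv (Finset.mem_image.mpr ⟨j, Finset.mem_univ j, hj⟩)
    rw [S.kIdx_eq_of_eq (hρ'off v hv').symm]
  have hsplit : ∀ σ : S.RConf, S.mu σ =
      (∑ v ∈ Finset.image f Finset.univ, S.kIdx σ v * S.weight v) +
      ∑ v ∈ (Finset.image f Finset.univ)ᶜ, S.kIdx σ v * S.weight v := by
    intro σ
    rw [Finset.sum_add_sum_compl]
    rfl
  have himg : ∀ σ : S.RConf,
      (∑ v ∈ Finset.image f Finset.univ, S.kIdx σ v * S.weight v) =
      ∑ j : ZMod r, S.kIdx σ (f j) * S.weight (f j) :=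
    fun σ => Finset.sum_image (fun x _ y _ h => hinj h)
  -- pointwise inequality
  have hpoint : ∀ j : ZMod r,
      S.kIdx ρ' (f j) * S.weight (f j) + (if j = j₀ then S.weight (f j₀) else 0) ≤
      S.kIdx ρ (f j) * S.weight (f j) +
        (if ρ.1 (f j) = S.baseArc (f j) then (S.period - 1) * S.weight (f j) else 0) := by
    intro j
    by_cases hw : ρ.1 (f j) = S.baseArc (f j)
    · have hk0 : S.kIdx ρ (f j) = 0 := S.kIdx_zero_of_eq hw
      have hk' : S.kIdx ρ' (f j) ≤ S.period - 1 := S.kIdx_prevArc_of_eq (hρ'on j) hw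
      have hjne : j ≠ j₀ := by
        intro hEq
        exact hj₀ne (hEq ▸ hw)
      rw [if_neg hjne, if_pos hw, hk0]
      simp only [zero_mul, zero_add, add_zero]
      exact Nat.mul_le_mul_right _ hk'
    · have hk' : S.kIdx ρ' (f j) = S.kIdx ρ (f j) - 1 :=
        S.kIdx_prevArc_of_ne (hρ'on j) hw
      have hkpos : 0 < S.kIdx ρ (f j) := S.kIdx_pos_of_ne hw
      rw [if_neg hw, add_zero, hk']
      by_cases hj : j = j₀
      · subst hj
        rw [if_pos rfl]
        have : (S.kIdx ρ (f j) - 1) * S.weight (f j) + S.weight (f j)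
            = S.kIdx ρ (f j) * S.weight (f j) := by
          rw [← Nat.succ_mul]
          congr 1
          omega
        omega
      · rw [if_neg hj, add_zero]
        exact Nat.mul_le_mul_right _ (by omega)
  -- the wrap terms are small
  have hwrapsum : (∑ j : ZMod r,
      (if ρ.1 (f j) = S.baseArc (f j) then (S.period - 1) * S.weight (f j) else 0))
      < S.weight (f j₀) := by
    by_cases hex : ∃ j, ρ.1 (f j) = S.baseArc (f j)
    · obtain ⟨jw, hjw⟩ := hex
      have hdlt : S.distT (f j₀).1 < S.maxDist := by
        have h1 := hwrapdist jw hjw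
        have h2 := S.distT_le_maxDist (f jw)
        omega
      have hbound : ∀ j : ZMod r,
          (if ρ.1 (f j) = S.baseArc (f j) then (S.period - 1) * S.weight (f j) else 0)
          ≤ (S.period - 1) * S.wBase ^ (S.maxDist - S.distT (f j₀).1 - 1) := by
        intro j
        by_cases hw : ρ.1 (f j) = S.baseArc (f j)
        · rw [if_pos hw]
          apply Nat.mul_le_mul_left
          unfold weight
          apply Nat.pow_le_pow_right S.wBase_pos
          have := hwrapdist j hw
          omega
        · rw [if_neg hw]
          exact Nat.zero_le _
      calc (∑ j : ZMod r, _) ≤ Fintype.card (ZMod r) •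
            ((S.period - 1) * S.wBase ^ (S.maxDist - S.distT (f j₀).1 - 1)) :=
              Finset.sum_le_card_nsmul _ _ _ (fun j _ => hbound j)
        _ = Fintype.card (ZMod r) *
            ((S.period - 1) * S.wBase ^ (S.maxDist - S.distT (f j₀).1 - 1)) := by
              rw [smul_eq_mul]
        _ < S.weight (f j₀) := by
            unfold weight
            have hcard : Fintype.card (ZMod r) ≤ Fintype.card S.V0 :=
              Fintype.card_le_of_injective f hinj
            have hexp : S.maxDist - S.distT (f j₀).1
                = (S.maxDist - S.distT (f j₀).1 - 1) + 1 := by omega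
            rw [hexp, pow_succ]
            have hB : Fintype.card (ZMod r) * (S.period - 1) < S.wBase := by
              unfold wBase
              have hP := S.period_pos
              have : Fintype.card (ZMod r) * (S.period - 1)
                  ≤ Fintype.card S.V0 * (S.period - 1) := Nat.mul_le_mul_right _ hcard
              have : Fintype.card S.V0 * (S.period - 1) ≤ Fintype.card S.V0 * S.period :=
                Nat.mul_le_mul_left _ (by omega)
              omega
            calc Fintype.card (ZMod r) *
                ((S.period - 1) * S.wBase ^ (S.maxDist - S.distT (f j₀).1 - 1))
                = (Fintype.card (ZMod r) * (S.period - 1)) *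
                  S.wBase ^ (S.maxDist - S.distT (f j₀).1 - 1) := by ring
              _ < S.wBase ^ (S.maxDist - S.distT (f j₀).1 - 1) * S.wBase := by
                  rw [mul_comm (S.wBase ^ _) S.wBase]
                  exact Nat.mul_lt_mul_of_lt_of_le hB le_rfl
                    (pow_pos S.wBase_pos _)
    · push_neg at hex
      have : (∑ j : ZMod r,
          (if ρ.1 (f j) = S.baseArc (f j) then (S.period - 1) * S.weight (f j) else 0))
          = 0 := by
        apply Finset.sum_eq_zero
        intro j _
        rw [if_neg (hex j)]
      rw [this]
      exact S.weight_pos (f j₀)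
  -- assemble
  have hsum1 : (∑ j : ZMod r, S.kIdx ρ' (f j) * S.weight (f j)) + S.weight (f j₀)
      ≤ (∑ j : ZMod r, S.kIdx ρ (f j) * S.weight (f j)) +
        ∑ j : ZMod r, (if ρ.1 (f j) = S.baseArc (f j)
          then (S.period - 1) * S.weight (f j) else 0) := by
    have := Finset.sum_le_sum (fun j (_ : j ∈ Finset.univ) => hpoint j)
    rw [Finset.sum_add_distrib, Finset.sum_add_distrib] at this
    simpa using this
  have hmain : (∑ j : ZMod r, S.kIdx ρ' (f j) * S.weight (f j))
      < ∑ j : ZMod r, S.kIdx ρ (f j) * S.weight (f j) := by omega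
  rw [hsplit ρ, hsplit ρ', himg ρ, himg ρ',
    Finset.sum_congr rfl (fun v hv => hcompl v (Finset.mem_compl.mp hv))]
  omega

theorem exists_acyclic_pushEquiv (ρ : S.RConf) :
    ∃ ξ : S.RConf, S.PushEquiv ρ ξ ∧ S.IsAcyclicConf ξ := by
  classical
  suffices H : ∀ n (σ : S.RConf), S.mu σ = n →
      ∃ ξ : S.RConf, S.PushEquiv σ ξ ∧ S.IsAcyclicConf ξ from H _ ρ rfl
  intro n
  induction n using Nat.strong_induction_on with
  | _ n ih =>
      intro σ hσ
      by_cases hac : S.IsAcyclicConf σ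
      · exact ⟨σ, S.pushEquiv_refl σ, hac⟩
      · obtain ⟨σ', hpush, hlt⟩ := S.exists_pop hac
        obtain ⟨ξ, hequiv, hacξ⟩ := ih (S.mu σ') (hσ ▸ hlt) σ' rfl
        exact ⟨ξ, S.pushEquiv_trans (S.pushEquiv_of_push hpush) hequiv, hacξ⟩

/-! ### The quotient by push equivalence and the final assembly -/

def pushSetoid : Setoid S.RConf :=
  ⟨S.PushEquiv, fun a => S.pushEquiv_refl a, fun h => S.pushEquiv_symm h,
    fun h1 h2 => S.pushEquiv_trans h1 h2⟩

noncomputable def addAtQ (w : S.V0) :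
    Quotient S.pushSetoid → Quotient S.pushSetoid :=
  Quotient.map (S.addAt w) (fun _ _ h => S.pushEquiv_addAt h w)

lemma addAtQ_surjective (w : S.V0) : Function.Surjective (S.addAtQ w) := by
  intro q
  induction q using Quotient.inductionOn with
  | _ a =>
      obtain ⟨ξ, hξ, hac⟩ := S.exists_acyclic_pushEquiv a
      obtain ⟨rho2, hrho2⟩ := S.acyclic_mem_range_addAt ξ hac w
      refine ⟨Quotient.mk _ rho2, ?_⟩
      show Quotient.mk _ (S.addAt w rho2) = Quotient.mk _ a
      rw [hrho2]
      exact Quotient.sound (S.pushEquiv_symm hξ)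

lemma addAtQ_injective (w : S.V0) : Function.Injective (S.addAtQ w) := by
  haveI : Finite S.RConf := Subtype.finite
  haveI : Finite (Quotient S.pushSetoid) := Quotient.finite _
  exact Finite.injective_iff_surjective.mpr (S.addAtQ_surjective w)

lemma addAt_reflect (w : S.V0) {a b : S.RConf}
    (h : S.PushEquiv (S.addAt w a) (S.addAt w b)) : S.PushEquiv a b := by
  have h1 : S.addAtQ w (Quotient.mk _ a) = S.addAtQ w (Quotient.mk _ b) :=
    Quotient.sound h
  exact Quotient.exact (S.addAtQ_injective w h1)

lemma addAt_iterate_reflect (w : S.V0) (n : ℕ) {a b : S.RConf}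
    (h : S.PushEquiv ((S.addAt w)^[n] a) ((S.addAt w)^[n] b)) : S.PushEquiv a b := by
  induction n with
  | zero => exact h
  | succ n ih =>
      rw [Function.iterate_succ_apply', Function.iterate_succ_apply'] at h
      exact ih (S.addAt_reflect w h)

lemma foldr_reflect (σ : S.PConf) (L : List S.V0) {a b : S.RConf}
    (h : S.PushEquiv (L.foldr (fun v r => (S.addAt v)^[σ v] r) a)
      (L.foldr (fun v r => (S.addAt v)^[σ v] r) b)) : S.PushEquiv a b := by
  induction L with
  | nil => exact h
  | cons v L ih =>
      rw [List.foldr_cons, List.foldr_cons] at h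
      exact ih (S.addAt_iterate_reflect v (σ v) h)

theorem requiv_pushEquiv {ρ₁ ρ₂ : S.RConf} (h : S.REquiv ρ₁ ρ₂) :
    S.PushEquiv ρ₁ ρ₂ := by
  obtain ⟨σ, hσ⟩ := h
  apply S.foldr_reflect σ (Finset.univ : Finset S.V0).toList
  show S.PushEquiv (S.act σ ρ₁) (S.act σ ρ₂)
  rw [hσ]
  exact S.pushEquiv_refl _
end RotorSystem

/-- **Lemma (equivalent configurations route to the same target).**
If `ρ₁ ≡ ρ₂`, then a single particle started at any non-target vertex `v` reaches the
same target vertex from `ρ₁` as from `ρ₂`: `t_v(ρ₁) = t_v(ρ₂)`. -/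
theorem requiv_same_target {V E : Type} [Fintype V] [DecidableEq V] [Fintype E]
    [DecidableEq E] (S : RotorSystem V E)
    (ρ₁ ρ₂ : S.RConf) (h : S.REquiv ρ₁ ρ₂) (v : S.V0) :
    S.tgt v.1 ρ₁ = S.tgt v.1 ρ₂ :=
  S.pushEquiv_tgt (S.requiv_pushEquiv h) v.1
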